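/- For every d-dimensional state ρ_A, the relative entropy of coherence equals the coherent information of the associated maximally correlated state: C_r(ρ_A) = S(ρ̃_{A'}) − S(ρ̃_{AA'}), where ρ̃_{AA'} = ∑_{i,j} ρ_{ij} |i⟩⟨j|_A ⊗ |i⟩⟨j|_{A'} and ρ̃_{A'} = Tr_A ρ̃_{AA'}. -/

import Mathlib

open scoped BigOperators Kronecker ENNReal Matrix ComplexOrder Classical
open Filter

noncomputable section

namespace QIT

/-! ## States, trace norm, partial traces -/

/-- A quantum state: a positive semidefinite, unit-trace operator. -/
def IsState {n : Type} [Fintype n] (ρ : Matrix n n ℂ) : Prop :=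
  ρ.PosSemidef ∧ ρ.trace = 1

/-- The trace norm `‖M‖₁ = Tr √(MᴴM)`. -/
def traceNorm {n : Type} [Fintype n] [DecidableEq n] (M : Matrix n n ℂ) : ℝ :=
  (((Matrix.posSemidef_conjTranspose_mul_self M).1.eigenvectorUnitary : Matrix n n ℂ) *
    Matrix.diagonal ((fun x : ℝ => ((Real.sqrt x : ℝ) : ℂ)) ∘
      (Matrix.posSemidef_conjTranspose_mul_self M).1.eigenvalues) *
    (star ((Matrix.posSemidef_conjTranspose_mul_self M).1.eigenvectorUnitary : Matrix n n ℂ))).trace.re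

/-- Partial trace over the second tensor factor. -/
def ptraceRight {a b : Type} [Fintype b] (ρ : Matrix (a × b) (a × b) ℂ) :
    Matrix a a ℂ := fun i j => ∑ k, ρ (i, k) (j, k)

/-- Partial trace over the first tensor factor. -/
def ptraceLeft {a b : Type} [Fintype a] (ρ : Matrix (a × b) (a × b) ℂ) :
    Matrix b b ℂ := fun i j => ∑ k, ρ (k, i) (k, j)

/-- Partial transpose on the second factor. -/
def ptB {a b : Type} (ρ : Matrix (a × b) (a × b) ℂ) : Matrix (a × b) (a × b) ℂ :=
  fun p q => ρ (p.1, q.2) (q.1, p.2)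

/-- A state is PPT when its partial transpose is positive semidefinite. -/
def IsPPT {a b : Type} [Fintype a] [Fintype b] (ρ : Matrix (a × b) (a × b) ℂ) : Prop :=
  (ptB ρ).PosSemidef

/-- Membership in the separable cone: a finite sum of Kronecker products of PSD operators. -/
def InSepCone {a b : Type} [Fintype a] [Fintype b] (M : Matrix (a × b) (a × b) ℂ) : Prop :=
  ∃ (k : ℕ) (x : Fin k → Matrix a a ℂ) (y : Fin k → Matrix b b ℂ),
    (∀ i, (x i).PosSemidef) ∧ (∀ i, (y i).PosSemidef) ∧ M = ∑ i, x i ⊗ₖ y i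

/-- Membership in the PPT cone. -/
def InPPTCone {a b : Type} [Fintype a] [Fintype b] (M : Matrix (a × b) (a × b) ℂ) : Prop :=
  M.PosSemidef ∧ (ptB M).PosSemidef

/-- `n`-fold tensor power of a bipartite operator, with all `A` factors grouped together
and all `B` factors grouped together (the `Aⁿ : Bⁿ` cut). -/
def bpow {a b : Type} [Fintype a] [Fintype b] (ρ : Matrix (a × b) (a × b) ℂ) (n : ℕ) :
    Matrix ((Fin n → a) × (Fin n → b)) ((Fin n → a) × (Fin n → b)) ℂ :=
  fun p q => ∏ i, ρ (p.1 i, p.2 i) (q.1 i, q.2 i)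

/-- The maximally entangled state `Φ_d` of local dimension `d`. -/
def phi (d : ℕ) : Matrix (Fin d × Fin d) (Fin d × Fin d) ℂ :=
  fun p q => if p.1 = p.2 ∧ q.1 = q.2 then ((d : ℂ))⁻¹ else 0

/-! ## Channels -/

/-- A quantum channel (CPTP map), via the Choi–Kraus representation. -/
def IsCPTP {m n : Type} [Fintype m] [DecidableEq m] [Fintype n]
    (Λ : Matrix m m ℂ → Matrix n n ℂ) : Prop :=
  ∃ (k : ℕ) (K : Fin k → Matrix n m ℂ),
    (∑ i, (K i)ᴴ * K i = 1) ∧ ∀ ρ, Λ ρ = ∑ i, K i * ρ * (K i)ᴴ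

/-- LOCC channels between bipartite systems: finite compositions of one-way rounds, in which
one party applies a (fine-grained) quantum instrument, communicates the classical outcome,
and the other party applies a channel depending on the outcome. -/
inductive IsLOCC :
    ∀ (a b a' b' : Type) [Fintype a] [DecidableEq a] [Fintype b] [DecidableEq b]
      [Fintype a'] [DecidableEq a'] [Fintype b'] [DecidableEq b'],
      (Matrix (a × b) (a × b) ℂ → Matrix (a' × b') (a' × b') ℂ) → Prop
  | oneWayA {a b a' b' : Type} [Fintype a] [DecidableEq a] [Fintype b] [DecidableEq b]
      [Fintype a'] [DecidableEq a'] [Fintype b'] [DecidableEq b']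
      (k l : ℕ) (KA : Fin k → Matrix a' a ℂ) (KB : Fin k → Fin l → Matrix b' b ℂ)
      (hA : ∑ i, (KA i)ᴴ * KA i = 1) (hB : ∀ i, ∑ j, (KB i j)ᴴ * KB i j = 1) :
      IsLOCC a b a' b' (fun ρ => ∑ i, ∑ j, (KA i ⊗ₖ KB i j) * ρ * (KA i ⊗ₖ KB i j)ᴴ)
  | oneWayB {a b a' b' : Type} [Fintype a] [DecidableEq a] [Fintype b] [DecidableEq b]
      [Fintype a'] [DecidableEq a'] [Fintype b'] [DecidableEq b']
      (k l : ℕ) (KB : Fin k → Matrix b' b ℂ) (KA : Fin k → Fin l → Matrix a' a ℂ)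
      (hB : ∑ i, (KB i)ᴴ * KB i = 1) (hA : ∀ i, ∑ j, (KA i j)ᴴ * KA i j = 1) :
      IsLOCC a b a' b' (fun ρ => ∑ i, ∑ j, (KA i j ⊗ₖ KB i) * ρ * (KA i j ⊗ₖ KB i)ᴴ)
  | comp {a b a₁ b₁ a' b' : Type} [Fintype a] [DecidableEq a] [Fintype b] [DecidableEq b]
      [Fintype a₁] [DecidableEq a₁] [Fintype b₁] [DecidableEq b₁]
      [Fintype a'] [DecidableEq a'] [Fintype b'] [DecidableEq b']
      {Λ₁ : Matrix (a × b) (a × b) ℂ → Matrix (a₁ × b₁) (a₁ × b₁) ℂ}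
      {Λ₂ : Matrix (a₁ × b₁) (a₁ × b₁) ℂ → Matrix (a' × b') (a' × b') ℂ} :
      IsLOCC a b a₁ b₁ Λ₁ → IsLOCC a₁ b₁ a' b' Λ₂ → IsLOCC a b a' b' (fun ρ => Λ₂ (Λ₁ ρ))

/-! ## Catalysts: regrouping of tensor factors -/

/-- The regrouping `(A×B)×(C×D) ≃ (A×C)×(B×D)`. -/
def sysCat (a b c d : Type) : ((a × b) × c × d) ≃ ((a × c) × b × d) :=
  Equiv.prodProdProdComm a b c d

/-- `ρ_AB ⊗ τ_CD`, regrouped so that the bipartition is `AC : BD`. -/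
def catIn {a b c d : Type} (ρ : Matrix (a × b) (a × b) ℂ) (τ : Matrix (c × d) (c × d) ℂ) :
    Matrix ((a × c) × b × d) ((a × c) × b × d) ℂ :=
  Matrix.reindex (sysCat a b c d) (sysCat a b c d) (ρ ⊗ₖ τ)

/-- Reduced state of a system+catalyst state on `(A'C)(B'D)` on the main system `A'B'`. -/
def sysOut {a c b d : Type} [Fintype c] [Fintype d]
    (X : Matrix ((a × c) × b × d) ((a × c) × b × d) ℂ) : Matrix (a × b) (a × b) ℂ :=
  ptraceRight (Matrix.reindex (sysCat a c b d) (sysCat a c b d) X)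

/-- Reduced state of a system+catalyst state on `(A'C)(B'D)` on the catalyst `CD`. -/
def catOut {a c b d : Type} [Fintype a] [Fintype b]
    (X : Matrix ((a × c) × b × d) ((a × c) × b × d) ℂ) : Matrix (c × d) (c × d) ℂ :=
  ptraceLeft (Matrix.reindex (sysCat a c b d) (sysCat a c b d) X)

/-- Tensor product `⨂ⱼ τ_{CⱼDⱼ}` of a finite family of bipartite states,
grouped as `(C₁⋯C_k) : (D₁⋯D_k)`. -/
def piKron {k : ℕ} (c d : Fin k → ℕ)
    (τ : ∀ j, Matrix (Fin (c j) × Fin (d j)) (Fin (c j) × Fin (d j)) ℂ) :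
    Matrix ((∀ j, Fin (c j)) × ∀ j, Fin (d j)) ((∀ j, Fin (c j)) × ∀ j, Fin (d j)) ℂ :=
  fun p q => ∏ j, τ j (p.1 j, p.2 j) (q.1 j, q.2 j)

/-- The marginal of a multipartite catalyst state on the pair `CⱼDⱼ`. -/
def catMarginal {k : ℕ} {c d : Fin k → ℕ} (j : Fin k)
    (X : Matrix ((∀ i, Fin (c i)) × ∀ i, Fin (d i)) ((∀ i, Fin (c i)) × ∀ i, Fin (d i)) ℂ) :
    Matrix (Fin (c j) × Fin (d j)) (Fin (c j) × Fin (d j)) ℂ :=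
  ptraceRight (Matrix.reindex
    ((Equiv.prodCongr (Equiv.piSplitAt j fun i => Fin (c i)) (Equiv.piSplitAt j fun i => Fin (d i))).trans
      (Equiv.prodProdProdComm _ _ _ _))
    ((Equiv.prodCongr (Equiv.piSplitAt j fun i => Fin (c i)) (Equiv.piSplitAt j fun i => Fin (d i))).trans
      (Equiv.prodProdProdComm _ _ _ _)) X)

/-! ## Classes of operations and catalytic transformations -/

/-- A class of free operations of bipartite entanglement theory: for each choice of
input/output systems, a predicate on maps between the corresponding matrix spaces. -/
abbrev OpClass : Type 1 :=
  ∀ (a b a' b' : Type) [Fintype a] [DecidableEq a] [Fintype b] [DecidableEq b]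
    [Fintype a'] [DecidableEq a'] [Fintype b'] [DecidableEq b'],
    (Matrix (a × b) (a × b) ℂ → Matrix (a' × b') (a' × b') ℂ) → Prop

/-- LOCC operations, as an `OpClass`. -/
def LOCCClass : OpClass := IsLOCC

/-- PPT-preserving operations: channels mapping PPT states to PPT states. -/
def PPTPClass (a b a' b' : Type) [Fintype a] [DecidableEq a] [Fintype b] [DecidableEq b]
    [Fintype a'] [DecidableEq a'] [Fintype b'] [DecidableEq b']
    (Λ : Matrix (a × b) (a × b) ℂ → Matrix (a' × b') (a' × b') ℂ) : Prop :=
  IsCPTP Λ ∧ ∀ σ, IsState σ → IsPPT σ → IsPPT (Λ σ)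

/-- Non-entangling (separability-preserving) operations. -/
def NEClass (a b a' b' : Type) [Fintype a] [DecidableEq a] [Fintype b] [DecidableEq b]
    [Fintype a'] [DecidableEq a'] [Fintype b'] [DecidableEq b']
    (Λ : Matrix (a × b) (a × b) ℂ → Matrix (a' × b') (a' × b') ℂ) : Prop :=
  IsCPTP Λ ∧ ∀ σ, IsState σ → InSepCone σ → InSepCone (Λ σ)

/-- The various kinds of catalytic assistance. -/
inductive CatKind
  | plain  -- no catalyst
  | c      -- catalyst
  | cc     -- correlated catalyst
  | mc     -- marginal catalysts
  | mcc    -- marginal correlated catalysts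

/-- `Transform F T ρ ω`: the state `ρ` can be transformed into `ω` by operations in the
class `F` assisted by catalysts of kind `T`. -/
def Transform (F : OpClass) (T : CatKind) {a b a' b' : Type}
    [Fintype a] [DecidableEq a] [Fintype b] [DecidableEq b]
    [Fintype a'] [DecidableEq a'] [Fintype b'] [DecidableEq b']
    (ρ : Matrix (a × b) (a × b) ℂ) (ω : Matrix (a' × b') (a' × b') ℂ) : Prop :=
  match T with
  | .plain => ∃ Λ, F a b a' b' Λ ∧ Λ ρ = ω
  | .c => ∃ (dc dd : ℕ) (τ : Matrix (Fin dc × Fin dd) (Fin dc × Fin dd) ℂ)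
        (Λ : Matrix ((a × Fin dc) × b × Fin dd) ((a × Fin dc) × b × Fin dd) ℂ →
             Matrix ((a' × Fin dc) × b' × Fin dd) ((a' × Fin dc) × b' × Fin dd) ℂ),
      IsState τ ∧ F (a × Fin dc) (b × Fin dd) (a' × Fin dc) (b' × Fin dd) Λ ∧
      Λ (catIn ρ τ) = catIn ω τ
  | .cc => ∃ (dc dd : ℕ) (τ : Matrix (Fin dc × Fin dd) (Fin dc × Fin dd) ℂ)
        (Λ : Matrix ((a × Fin dc) × b × Fin dd) ((a × Fin dc) × b × Fin dd) ℂ →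
             Matrix ((a' × Fin dc) × b' × Fin dd) ((a' × Fin dc) × b' × Fin dd) ℂ),
      IsState τ ∧ F (a × Fin dc) (b × Fin dd) (a' × Fin dc) (b' × Fin dd) Λ ∧
      sysOut (Λ (catIn ρ τ)) = ω ∧ catOut (Λ (catIn ρ τ)) = τ
  | .mc => ∃ (k : ℕ) (c d : Fin k → ℕ)
        (τs : ∀ j, Matrix (Fin (c j) × Fin (d j)) (Fin (c j) × Fin (d j)) ℂ)
        (Λ : Matrix ((a × ∀ j, Fin (c j)) × b × ∀ j, Fin (d j))
               ((a × ∀ j, Fin (c j)) × b × ∀ j, Fin (d j)) ℂ →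
             Matrix ((a' × ∀ j, Fin (c j)) × b' × ∀ j, Fin (d j))
               ((a' × ∀ j, Fin (c j)) × b' × ∀ j, Fin (d j)) ℂ)
        (τ' : Matrix ((∀ j, Fin (c j)) × ∀ j, Fin (d j)) ((∀ j, Fin (c j)) × ∀ j, Fin (d j)) ℂ),
      (∀ j, IsState (τs j)) ∧
      F (a × ∀ j, Fin (c j)) (b × ∀ j, Fin (d j)) (a' × ∀ j, Fin (c j)) (b' × ∀ j, Fin (d j)) Λ ∧
      Λ (catIn ρ (piKron c d τs)) = catIn ω τ' ∧ ∀ j, catMarginal j τ' = τs j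
  | .mcc => ∃ (k : ℕ) (c d : Fin k → ℕ)
        (τs : ∀ j, Matrix (Fin (c j) × Fin (d j)) (Fin (c j) × Fin (d j)) ℂ)
        (Λ : Matrix ((a × ∀ j, Fin (c j)) × b × ∀ j, Fin (d j))
               ((a × ∀ j, Fin (c j)) × b × ∀ j, Fin (d j)) ℂ →
             Matrix ((a' × ∀ j, Fin (c j)) × b' × ∀ j, Fin (d j))
               ((a' × ∀ j, Fin (c j)) × b' × ∀ j, Fin (d j)) ℂ),
      (∀ j, IsState (τs j)) ∧
      F (a × ∀ j, Fin (c j)) (b × ∀ j, Fin (d j)) (a' × ∀ j, Fin (c j)) (b' × ∀ j, Fin (d j)) Λ ∧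
      sysOut (Λ (catIn ρ (piKron c d τs))) = ω ∧
      ∀ j, catMarginal j (catOut (Λ (catIn ρ (piKron c d τs)))) = τs j

/-! ## Asymptotic rates: distillable entanglement and entanglement cost -/

/-- Achievable rates for distillation of maximally entangled two-qubit states from `ρ`. -/
def distRates (F : OpClass) (T : CatKind) {a b : Type}
    [Fintype a] [DecidableEq a] [Fintype b] [DecidableEq b]
    (ρ : Matrix (a × b) (a × b) ℂ) : Set ℝ :=
  {R | 0 ≤ R ∧ ∃ ε : ℕ → ℝ, Tendsto ε atTop (nhds 0) ∧
    ∀ n : ℕ, ∃ ω' : Matrix ((Fin ⌈R * n⌉₊ → Fin 2) × (Fin ⌈R * n⌉₊ → Fin 2))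
        ((Fin ⌈R * n⌉₊ → Fin 2) × (Fin ⌈R * n⌉₊ → Fin 2)) ℂ,
      IsState ω' ∧ Transform F T (bpow ρ n) ω' ∧
      traceNorm (ω' - bpow (phi 2) ⌈R * n⌉₊) / 2 ≤ ε n}

/-- Distillable entanglement `E_{d,F̃}(ρ) = R_F̃(ρ → Φ₂)`. -/
def Ed (F : OpClass) (T : CatKind) {a b : Type}
    [Fintype a] [DecidableEq a] [Fintype b] [DecidableEq b]
    (ρ : Matrix (a × b) (a × b) ℂ) : ℝ≥0∞ :=
  ⨆ R ∈ distRates F T ρ, ENNReal.ofReal R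

/-- Achievable rates for dilution, i.e. for the transformation `Φ₂ → ρ`. -/
def dilRates (F : OpClass) (T : CatKind) {a b : Type}
    [Fintype a] [DecidableEq a] [Fintype b] [DecidableEq b]
    (ρ : Matrix (a × b) (a × b) ℂ) : Set ℝ :=
  {R | 0 ≤ R ∧ ∃ ε : ℕ → ℝ, Tendsto ε atTop (nhds 0) ∧
    ∀ n : ℕ, ∃ ω' : Matrix ((Fin ⌈R * n⌉₊ → a) × (Fin ⌈R * n⌉₊ → b))
        ((Fin ⌈R * n⌉₊ → a) × (Fin ⌈R * n⌉₊ → b)) ℂ,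
      IsState ω' ∧ Transform F T (bpow (phi 2) n) ω' ∧
      traceNorm (ω' - bpow ρ ⌈R * n⌉₊) / 2 ≤ ε n}

/-- Entanglement cost `E_{c,F̃}(ρ) = 1 / R_F̃(Φ₂ → ρ)`. -/
def Ec (F : OpClass) (T : CatKind) {a b : Type}
    [Fintype a] [DecidableEq a] [Fintype b] [DecidableEq b]
    (ρ : Matrix (a × b) (a × b) ℂ) : ℝ≥0∞ :=
  (⨆ R ∈ dilRates F T ρ, ENNReal.ofReal R)⁻¹

/-! ## Entropic quantities -/

/-- Matrix logarithm (base 2) of a Hermitian matrix, via the spectral decomposition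
(with the convention `log 0 = 0` on the kernel); junk value `0` on non-Hermitian inputs. -/
def matLog {n : Type} [Fintype n] [DecidableEq n] (M : Matrix n n ℂ) : Matrix n n ℂ :=
  if hM : M.IsHermitian then
    (hM.eigenvectorUnitary : Matrix n n ℂ) *
      Matrix.diagonal (fun i => (Real.logb 2 (hM.eigenvalues i) : ℂ)) *
      (hM.eigenvectorUnitary : Matrix n n ℂ)ᴴ
  else 0

/-- The Umegaki relative entropy `D(ρ‖σ) = Tr ρ (log₂ ρ − log₂ σ)`, equal to `∞` when
the support of `ρ` is not contained in the support of `σ`. -/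
def relEnt {n : Type} [Fintype n] [DecidableEq n] (ρ σ : Matrix n n ℂ) : ℝ≥0∞ :=
  if ∀ v : n → ℂ, σ.mulVec v = 0 → ρ.mulVec v = 0 then
    ENNReal.ofReal ((ρ * (matLog ρ - matLog σ)).trace.re)
  else ⊤

/-- Kullback–Leibler divergence of finitely supported distributions (base 2). -/
def klDiv {ι : Type} [Fintype ι] (p q : ι → ℝ) : ℝ≥0∞ :=
  if ∀ i, q i = 0 → p i = 0 then
    ENNReal.ofReal (∑ i, p i * Real.logb 2 (p i / q i))
  else ⊤

/-- Von Neumann entropy `S(ρ) = −Tr ρ log₂ ρ`. -/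
def vnEnt {n : Type} [Fintype n] [DecidableEq n] (ρ : Matrix n n ℂ) : ℝ :=
  -(ρ * matLog ρ).trace.re

/-! ## Relative entropies of entanglement -/

/-- The two cones of free states. -/
inductive ConeKind | sep | ppt

/-- Membership in the cone specified by `κ`. -/
def inCone (κ : ConeKind) {a b : Type} [Fintype a] [Fintype b]
    (M : Matrix (a × b) (a × b) ℂ) : Prop :=
  match κ with
  | .sep => InSepCone M
  | .ppt => InPPTCone M

/-- The relative entropy of entanglement w.r.t. the cone `κ`:
`D_𝒦(ρ) = inf_{σ ∈ 𝒦¹} D(ρ‖σ)`. -/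
def DRel (κ : ConeKind) {a b : Type} [Fintype a] [DecidableEq a] [Fintype b] [DecidableEq b]
    (ρ : Matrix (a × b) (a × b) ℂ) : ℝ≥0∞ :=
  ⨅ (σ : Matrix (a × b) (a × b) ℂ) (_ : IsState σ) (_ : inCone κ σ), relEnt ρ σ

/-- Regularized relative entropy of entanglement; by tensor subadditivity of `D_𝒦` and
Fekete's lemma, the limit `lim_n (1/n) D_𝒦(ρ^{⊗n})` exists and equals the infimum. -/
def DRelReg (κ : ConeKind) {a b : Type} [Fintype a] [DecidableEq a] [Fintype b] [DecidableEq b]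
    (ρ : Matrix (a × b) (a × b) ℂ) : ℝ≥0∞ :=
  ⨅ (n : ℕ) (_ : 0 < n), ((n : ℝ≥0∞))⁻¹ * DRel κ (bpow ρ n)

/-- A POVM: finitely many PSD effects summing to the identity. -/
def IsPOVM {n : Type} [Fintype n] [DecidableEq n] {k : ℕ} (E : Fin k → Matrix n n ℂ) : Prop :=
  (∀ i, (E i).PosSemidef) ∧ ∑ i, E i = 1

/-- A POVM is LOCC-implementable if the associated measure-and-record-on-both-sides channel
is an LOCC channel. -/
def IsLOCCMeasurement {a b : Type} [Fintype a] [DecidableEq a] [Fintype b] [DecidableEq b]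
    {k : ℕ} (E : Fin k → Matrix (a × b) (a × b) ℂ) : Prop :=
  ∃ Λ : Matrix (a × b) (a × b) ℂ → Matrix (Fin k × Fin k) (Fin k × Fin k) ℂ,
    IsLOCC a b (Fin k) (Fin k) Λ ∧
    ∀ ρ, Λ ρ = Matrix.diagonal fun p => if p.1 = p.2 then ((E p.1) * ρ).trace else 0

/-- The three classes of bipartite measurements. -/
inductive MeasKind | locc | sep | ppt

/-- The defining condition for membership of a POVM in the class `μ`. -/
def measExtra (μ : MeasKind) {a b : Type} [Fintype a] [DecidableEq a] [Fintype b] [DecidableEq b]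
    {k : ℕ} (E : Fin k → Matrix (a × b) (a × b) ℂ) : Prop :=
  match μ with
  | .locc => IsLOCCMeasurement E
  | .sep => ∀ i, InSepCone (E i)
  | .ppt => ∀ i, InPPTCone (E i)

/-- The measured relative entropy of entanglement w.r.t. the cone `κ` and an arbitrary
collection `Meas` of measurements:
`D_𝒦^𝕂(ρ) = inf_{σ ∈ 𝒦¹} sup_{(E_i) ∈ 𝕂} D((Tr E_i ρ)_i ‖ (Tr E_i σ)_i)`. -/
def DMeasGen (κ : ConeKind) {a b : Type} [Fintype a] [DecidableEq a] [Fintype b] [DecidableEq b]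
    (Meas : ∀ k : ℕ, (Fin k → Matrix (a × b) (a × b) ℂ) → Prop)
    (ρ : Matrix (a × b) (a × b) ℂ) : ℝ≥0∞ :=
  ⨅ (σ : Matrix (a × b) (a × b) ℂ) (_ : IsState σ) (_ : inCone κ σ),
    ⨆ (k : ℕ) (E : Fin k → Matrix (a × b) (a × b) ℂ) (_ : IsPOVM E) (_ : Meas k E),
      klDiv (fun i => ((E i) * ρ).trace.re) (fun i => ((E i) * σ).trace.re)

/-- The `𝕂`-measured relative entropy of entanglement for `𝕂 ∈ {𝕃𝕆ℂℂ, 𝕊𝔼ℙ, ℙℙ𝕋}`. -/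
def DMeas (κ : ConeKind) (μ : MeasKind) {a b : Type}
    [Fintype a] [DecidableEq a] [Fintype b] [DecidableEq b]
    (ρ : Matrix (a × b) (a × b) ℂ) : ℝ≥0∞ :=
  DMeasGen κ (fun _k E => measExtra μ E) ρ

/-- Regularized measured relative entropy of entanglement; by (strong) superadditivity and
Fekete's lemma, the limit `lim_n (1/n) D_𝒦^𝕂(ρ^{⊗n})` exists and equals the supremum. -/
def DMeasReg (κ : ConeKind) (μ : MeasKind) {a b : Type}
    [Fintype a] [DecidableEq a] [Fintype b] [DecidableEq b]
    (ρ : Matrix (a × b) (a × b) ℂ) : ℝ≥0∞ :=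
  ⨆ (n : ℕ) (_ : 0 < n), ((n : ℝ≥0∞))⁻¹ * DMeas κ μ (bpow ρ n)

/-! ## Reductions of four-partite states -/

/-- Reduction of a state on `(A A') : (B B')` to `A : B`. -/
def redAB {a a' b b' : Type} [Fintype a'] [Fintype b']
    (ρ : Matrix ((a × a') × b × b') ((a × a') × b × b') ℂ) : Matrix (a × b) (a × b) ℂ :=
  fun p q => ∑ u, ∑ v, ρ ((p.1, u), (p.2, v)) ((q.1, u), (q.2, v))

/-- Reduction of a state on `(A A') : (B B')` to `A' : B'`. -/
def redA'B' {a a' b b' : Type} [Fintype a] [Fintype b]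
    (ρ : Matrix ((a × a') × b × b') ((a × a') × b × b') ℂ) : Matrix (a' × b') (a' × b') ℂ :=
  fun p q => ∑ i, ∑ j, ρ ((i, p.1), (j, p.2)) ((i, q.1), (j, q.2))

end QIT

namespace QIT

/-! ## Resource theory of coherence -/

/-- The completely dephasing channel `Δ` in the fixed (computational) basis. -/
def dephase {n : Type} [Fintype n] [DecidableEq n] (ρ : Matrix n n ℂ) : Matrix n n ℂ :=
  Matrix.diagonal fun i => ρ i i

/-- The relative entropy of coherence `C_r(ρ) = S(Δ(ρ)) − S(ρ)`. -/
def Cr {n : Type} [Fintype n] [DecidableEq n] (ρ : Matrix n n ℂ) : ℝ :=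
  vnEnt (dephase ρ) - vnEnt ρ

/-- The rank-one projector `|ψ⟩⟨ψ|`. -/
def pureProj {n : Type} (ψ : n → ℂ) : Matrix n n ℂ := Matrix.vecMulVec ψ (star ψ)

/-- The coherence of formation
`C_f(ρ) = inf_{ρ = ∑ₓ pₓ |ψₓ⟩⟨ψₓ|} ∑ₓ pₓ S(Δ(|ψₓ⟩⟨ψₓ|))`. -/
def Cf {n : Type} [Fintype n] [DecidableEq n] (ρ : Matrix n n ℂ) : ℝ :=
  sInf {x | ∃ (k : ℕ) (p : Fin k → ℝ) (ψ : Fin k → n → ℂ),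
    (∀ i, 0 ≤ p i) ∧ (∑ i, p i = 1) ∧ (∀ i, ∑ j, Complex.normSq (ψ i j) = 1) ∧
    ρ = ∑ i, (p i : ℂ) • pureProj (ψ i) ∧
    x = ∑ i, p i * vnEnt (dephase (pureProj (ψ i)))}

/-- A class of free operations of the resource theory of coherence. -/
abbrev OpClass1 : Type 1 :=
  ∀ (a b : Type) [Fintype a] [DecidableEq a] [Fintype b] [DecidableEq b],
    (Matrix a a ℂ → Matrix b b ℂ) → Prop

/-- A Kraus operator is incoherent when it maps each basis vector to a multiple of a basis
vector, i.e. each column has at most one non-zero entry. -/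
def IsIncoherentKraus {a b : Type} (K : Matrix b a ℂ) : Prop :=
  ∀ i : a, ∃ j : b, ∀ j' : b, K j' i ≠ 0 → j' = j

/-- Incoherent operations (IO): channels admitting a Kraus representation by incoherent
Kraus operators. -/
def IOClass (a b : Type) [Fintype a] [DecidableEq a] [Fintype b] [DecidableEq b]
    (Λ : Matrix a a ℂ → Matrix b b ℂ) : Prop :=
  ∃ (k : ℕ) (K : Fin k → Matrix b a ℂ),
    (∑ i, (K i)ᴴ * K i = 1) ∧ (∀ ρ, Λ ρ = ∑ i, K i * ρ * (K i)ᴴ) ∧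
    ∀ i, IsIncoherentKraus (K i)

/-- Strictly incoherent operations (SIO): channels admitting a Kraus representation in which
both each Kraus operator and its adjoint are incoherent. -/
def SIOClass (a b : Type) [Fintype a] [DecidableEq a] [Fintype b] [DecidableEq b]
    (Λ : Matrix a a ℂ → Matrix b b ℂ) : Prop :=
  ∃ (k : ℕ) (K : Fin k → Matrix b a ℂ),
    (∑ i, (K i)ᴴ * K i = 1) ∧ (∀ ρ, Λ ρ = ∑ i, K i * ρ * (K i)ᴴ) ∧
    ∀ i, IsIncoherentKraus (K i) ∧ IsIncoherentKraus ((K i)ᴴ)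

/-- `n`-fold tensor power of a single-system operator. -/
def spow {a : Type} (ρ : Matrix a a ℂ) (n : ℕ) : Matrix (Fin n → a) (Fin n → a) ℂ :=
  fun p q => ∏ i, ρ (p i) (q i)

/-- The coherence bit `|+⟩⟨+|`, `|+⟩ = (|0⟩+|1⟩)/√2`. -/
def plusM : Matrix (Fin 2) (Fin 2) ℂ := fun _ _ => 2⁻¹

/-- Tensor product `⨂ⱼ τ_{Cⱼ}` of a finite family of single-system states. -/
def piKron1 {k : ℕ} {c : Fin k → ℕ} (τ : ∀ j, Matrix (Fin (c j)) (Fin (c j)) ℂ) :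
    Matrix (∀ j, Fin (c j)) (∀ j, Fin (c j)) ℂ :=
  fun p q => ∏ j, τ j (p j) (q j)

/-- Marginal of a multipartite catalyst state on the `j`-th factor. -/
def marginal1 {k : ℕ} {c : Fin k → ℕ} (j : Fin k)
    (X : Matrix (∀ i, Fin (c i)) (∀ i, Fin (c i)) ℂ) : Matrix (Fin (c j)) (Fin (c j)) ℂ :=
  ptraceRight (Matrix.reindex (Equiv.piSplitAt j fun i => Fin (c i))
    (Equiv.piSplitAt j fun i => Fin (c i)) X)

/-- `TransformC F T ρ ω`: the state `ρ` can be transformed into `ω` by operations in the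
class `F` assisted by catalysts of kind `T` (single-party resource theory). -/
def TransformC (F : OpClass1) (T : CatKind) {a b : Type}
    [Fintype a] [DecidableEq a] [Fintype b] [DecidableEq b]
    (ρ : Matrix a a ℂ) (ω : Matrix b b ℂ) : Prop :=
  match T with
  | .plain => ∃ Λ, F a b Λ ∧ Λ ρ = ω
  | .c => ∃ (dc : ℕ) (τ : Matrix (Fin dc) (Fin dc) ℂ)
        (Λ : Matrix (a × Fin dc) (a × Fin dc) ℂ → Matrix (b × Fin dc) (b × Fin dc) ℂ),
      IsState τ ∧ F (a × Fin dc) (b × Fin dc) Λ ∧ Λ (ρ ⊗ₖ τ) = ω ⊗ₖ τ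
  | .cc => ∃ (dc : ℕ) (τ : Matrix (Fin dc) (Fin dc) ℂ)
        (Λ : Matrix (a × Fin dc) (a × Fin dc) ℂ → Matrix (b × Fin dc) (b × Fin dc) ℂ),
      IsState τ ∧ F (a × Fin dc) (b × Fin dc) Λ ∧
      ptraceRight (Λ (ρ ⊗ₖ τ)) = ω ∧ ptraceLeft (Λ (ρ ⊗ₖ τ)) = τ
  | .mc => ∃ (k : ℕ) (c : Fin k → ℕ) (τs : ∀ j, Matrix (Fin (c j)) (Fin (c j)) ℂ)
        (Λ : Matrix (a × ∀ j, Fin (c j)) (a × ∀ j, Fin (c j)) ℂ →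
             Matrix (b × ∀ j, Fin (c j)) (b × ∀ j, Fin (c j)) ℂ)
        (τ' : Matrix (∀ j, Fin (c j)) (∀ j, Fin (c j)) ℂ),
      (∀ j, IsState (τs j)) ∧ F (a × ∀ j, Fin (c j)) (b × ∀ j, Fin (c j)) Λ ∧
      Λ (ρ ⊗ₖ piKron1 τs) = ω ⊗ₖ τ' ∧ ∀ j, marginal1 j τ' = τs j
  | .mcc => ∃ (k : ℕ) (c : Fin k → ℕ) (τs : ∀ j, Matrix (Fin (c j)) (Fin (c j)) ℂ)
        (Λ : Matrix (a × ∀ j, Fin (c j)) (a × ∀ j, Fin (c j)) ℂ →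
             Matrix (b × ∀ j, Fin (c j)) (b × ∀ j, Fin (c j)) ℂ),
      (∀ j, IsState (τs j)) ∧ F (a × ∀ j, Fin (c j)) (b × ∀ j, Fin (c j)) Λ ∧
      ptraceRight (Λ (ρ ⊗ₖ piKron1 τs)) = ω ∧
      ∀ j, marginal1 j (ptraceLeft (Λ (ρ ⊗ₖ piKron1 τs))) = τs j

/-- Achievable rates for coherence distillation. -/
def cohDistRates (F : OpClass1) (T : CatKind) {a : Type} [Fintype a] [DecidableEq a]
    (ρ : Matrix a a ℂ) : Set ℝ :=
  {R | 0 ≤ R ∧ ∃ ε : ℕ → ℝ, Tendsto ε atTop (nhds 0) ∧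
    ∀ n : ℕ, ∃ ω' : Matrix (Fin ⌈R * n⌉₊ → Fin 2) (Fin ⌈R * n⌉₊ → Fin 2) ℂ,
      IsState ω' ∧ TransformC F T (spow ρ n) ω' ∧
      traceNorm (ω' - spow plusM ⌈R * n⌉₊) / 2 ≤ ε n}

/-- Distillable coherence `C_{d,F̃}(ρ) = R_F̃(ρ → |+⟩⟨+|)`. -/
def Cd (F : OpClass1) (T : CatKind) {a : Type} [Fintype a] [DecidableEq a]
    (ρ : Matrix a a ℂ) : ℝ≥0∞ :=
  ⨆ R ∈ cohDistRates F T ρ, ENNReal.ofReal R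

/-- Achievable rates for coherence dilution. -/
def cohDilRates (F : OpClass1) (T : CatKind) {a : Type} [Fintype a] [DecidableEq a]
    (ρ : Matrix a a ℂ) : Set ℝ :=
  {R | 0 ≤ R ∧ ∃ ε : ℕ → ℝ, Tendsto ε atTop (nhds 0) ∧
    ∀ n : ℕ, ∃ ω' : Matrix (Fin ⌈R * n⌉₊ → a) (Fin ⌈R * n⌉₊ → a) ℂ,
      IsState ω' ∧ TransformC F T (spow plusM n) ω' ∧
      traceNorm (ω' - spow ρ ⌈R * n⌉₊) / 2 ≤ ε n}

/-- Coherence cost `C_{c,F̃}(ρ) = 1 / R_F̃(|+⟩⟨+| → ρ)`. -/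
def Cc (F : OpClass1) (T : CatKind) {a : Type} [Fintype a] [DecidableEq a]
    (ρ : Matrix a a ℂ) : ℝ≥0∞ :=
  (⨆ R ∈ cohDilRates F T ρ, ENNReal.ofReal R)⁻¹

end QIT

namespace QIT

/-- The maximally correlated state `ρ̃_{AA'} = ∑_{i,j} ρ_{ij} |i⟩⟨j|_A ⊗ |i⟩⟨j|_{A'}`
associated with a state `ρ_A`. -/
def maxCorr {a : Type} (ρ : Matrix a a ℂ) : Matrix (a × a) (a × a) ℂ :=
  fun p q => if p.1 = p.2 ∧ q.1 = q.2 then ρ p.1 q.1 else 0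


open Matrix Polynomial in
private lemma charpoly_diagonal' {n : Type} [Fintype n] [DecidableEq n] (d : n → ℂ) :
    (Matrix.diagonal d).charpoly = ∏ i, ((X : ℂ[X]) - C (d i)) := by
  have h : charmatrix (Matrix.diagonal d)
      = Matrix.diagonal (fun i => (X : ℂ[X]) - C (d i)) := by
    ext i j
    by_cases h : i = j
    · subst h; simp
    · simp [Matrix.charmatrix_apply_ne _ _ _ h, Matrix.diagonal_apply_ne _ h]
  rw [Matrix.charpoly, h, Matrix.det_diagonal]

open Matrix Polynomial in
private lemma charpoly_conj' {n : Type} [Fintype n] [DecidableEq n]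
    (V M : Matrix n n ℂ) (h1 : V * Vᴴ = 1) :
    (V * M * Vᴴ).charpoly = M.charpoly := by
  have key : charmatrix (V * M * Vᴴ)
      = V.map (C : ℂ →+* ℂ[X]) * charmatrix M * (Vᴴ).map (C : ℂ →+* ℂ[X]) := by
    have hscal : V.map (C : ℂ →+* ℂ[X]) * Matrix.scalar n (X : ℂ[X]) * (Vᴴ).map C
        = Matrix.scalar n (X : ℂ[X]) := by
      rw [← (Matrix.scalar_commute (X : ℂ[X]) (fun r => Commute.all _ _) (V.map C)).eq,
        Matrix.mul_assoc]
      rw [show (V.map (C : ℂ →+* ℂ[X])) * (Vᴴ).map C = 1 by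
        rw [← Matrix.map_mul, h1, Matrix.map_one _ (map_zero _) (map_one _)]]
      rw [Matrix.mul_one]
    unfold Matrix.charmatrix
    rw [Matrix.mul_sub, Matrix.sub_mul, hscal]
    congr 1
    simp only [RingHom.mapMatrix_apply]
    rw [← Matrix.map_mul, ← Matrix.map_mul]
  have h2 : Vᴴ * V = 1 := mul_eq_one_comm.mp h1
  rw [Matrix.charpoly, Matrix.charpoly, key, Matrix.det_mul, Matrix.det_mul, mul_comm,
    ← mul_assoc, ← Matrix.det_mul, ← Matrix.map_mul, h2,
    Matrix.map_one _ (map_zero _) (map_one _), Matrix.det_one, one_mul]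

open Matrix Polynomial in
private lemma eigen_multiset' {n : Type} [Fintype n] [DecidableEq n] {M : Matrix n n ℂ}
    (hM : M.IsHermitian) (W : Matrix n n ℂ) (μ : n → ℝ)
    (h1 : W * Wᴴ = 1)
    (hdec : M = W * Matrix.diagonal (fun i => (μ i : ℂ)) * Wᴴ) :
    Finset.univ.val.map hM.eigenvalues = Finset.univ.val.map μ := by
  set U : Matrix n n ℂ := (hM.eigenvectorUnitary : Matrix n n ℂ) with hUdef
  have hU1 : U * Uᴴ = 1 := by
    have := Matrix.mem_unitaryGroup_iff.mp hM.eigenvectorUnitary.2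
    simpa [Matrix.star_eq_conjTranspose] using this
  have hspec : M = U * Matrix.diagonal (fun i => (hM.eigenvalues i : ℂ)) * Uᴴ := by
    have := hM.spectral_theorem
    simpa [Matrix.star_eq_conjTranspose, Function.comp_def] using this
  have hcp : (Matrix.diagonal (fun i => (hM.eigenvalues i : ℂ))).charpoly
      = (Matrix.diagonal (fun i => (μ i : ℂ))).charpoly := by
    rw [← charpoly_conj' U _ hU1, ← hspec, hdec, charpoly_conj' W _ h1]
  rw [charpoly_diagonal', charpoly_diagonal'] at hcp
  have hroots : Finset.univ.val.map (fun i => (hM.eigenvalues i : ℂ))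
      = Finset.univ.val.map (fun i => (μ i : ℂ)) := by
    have e1 := Polynomial.roots_multiset_prod_X_sub_C
      (Finset.univ.val.map (fun i => (hM.eigenvalues i : ℂ)))
    have e2 := Polynomial.roots_multiset_prod_X_sub_C
      (Finset.univ.val.map (fun i => (μ i : ℂ)))
    rw [Multiset.map_map] at e1 e2
    simp only [Function.comp_def] at e1 e2
    have hcp2 : (Finset.univ.val.map (fun i => (X : ℂ[X]) - C ((hM.eigenvalues i : ℂ)))).prod
        = (Finset.univ.val.map (fun i => (X : ℂ[X]) - C ((μ i : ℂ)))).prod := by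
      rw [← Finset.prod_eq_multiset_prod, ← Finset.prod_eq_multiset_prod]; exact hcp
    rw [← e1, ← e2, hcp2]
  have hco : ∀ f : n → ℝ, Finset.univ.val.map (fun i => ((f i : ℝ) : ℂ))
      = (Finset.univ.val.map f).map (fun x : ℝ => (x : ℂ)) := by
    intro f; rw [Multiset.map_map]; rfl
  rw [hco, hco] at hroots
  exact Multiset.map_injective Complex.ofReal_injective hroots

private lemma sum_comp_eq {n m : Type} [Fintype n] [Fintype m] {lam : n → ℝ} {μ : m → ℝ}
    (h : Finset.univ.val.map lam = Finset.univ.val.map μ) (g : ℝ → ℝ) :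
    ∑ i, g (lam i) = ∑ i, g (μ i) := by
  have : (Finset.univ.val.map lam).map g = (Finset.univ.val.map μ).map g := by rw [h]
  rw [Multiset.map_map, Multiset.map_map] at this
  calc ∑ i, g (lam i) = (Finset.univ.val.map (g ∘ lam)).sum := rfl
    _ = (Finset.univ.val.map (g ∘ μ)).sum := by rw [this]
    _ = ∑ i, g (μ i) := rfl

open Matrix in
private lemma vnEnt_eq_sum' {n : Type} [Fintype n] [DecidableEq n] {M : Matrix n n ℂ}
    (hM : M.IsHermitian) :
    vnEnt M = -∑ i, hM.eigenvalues i * Real.logb 2 (hM.eigenvalues i) := by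
  set U : Matrix n n ℂ := (hM.eigenvectorUnitary : Matrix n n ℂ) with hUdef
  have hU2 : Uᴴ * U = 1 := by
    have := Matrix.mem_unitaryGroup_iff'.mp hM.eigenvectorUnitary.2
    simpa [Matrix.star_eq_conjTranspose] using this
  have hspec : M = U * Matrix.diagonal (fun i => (hM.eigenvalues i : ℂ)) * Uᴴ := by
    have := hM.spectral_theorem
    simpa [Matrix.star_eq_conjTranspose, Function.comp_def] using this
  have hlog : matLog M
      = U * Matrix.diagonal (fun i => (Real.logb 2 (hM.eigenvalues i) : ℂ)) * Uᴴ := by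
    rw [matLog, dif_pos hM]
  have hmul : M * matLog M = U * Matrix.diagonal
      (fun i => ((hM.eigenvalues i * Real.logb 2 (hM.eigenvalues i) : ℝ) : ℂ)) * Uᴴ := by
    have hd : Matrix.diagonal (fun i => ((hM.eigenvalues i : ℝ) : ℂ))
          * Matrix.diagonal (fun i => ((Real.logb 2 (hM.eigenvalues i) : ℝ) : ℂ))
        = Matrix.diagonal
            (fun i => ((hM.eigenvalues i * Real.logb 2 (hM.eigenvalues i) : ℝ) : ℂ)) := by
      rw [Matrix.diagonal_mul_diagonal]
      refine congrArg _ (funext fun i => ?_); push_cast; ring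
    calc M * matLog M
        = (U * Matrix.diagonal (fun i => (hM.eigenvalues i : ℂ)) * Uᴴ)
          * (U * Matrix.diagonal (fun i => (Real.logb 2 (hM.eigenvalues i) : ℂ)) * Uᴴ) := by
          rw [← hspec, ← hlog]
      _ = U * (Matrix.diagonal (fun i => (hM.eigenvalues i : ℂ))
          * Matrix.diagonal (fun i => (Real.logb 2 (hM.eigenvalues i) : ℂ))) * Uᴴ := by
          simp only [Matrix.mul_assoc]
          rw [show Uᴴ * (U * (Matrix.diagonal
              (fun i => (Real.logb 2 (hM.eigenvalues i) : ℂ)) * Uᴴ))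
              = Matrix.diagonal (fun i => (Real.logb 2 (hM.eigenvalues i) : ℂ)) * Uᴴ by
            rw [← Matrix.mul_assoc, hU2, Matrix.one_mul]]
      _ = U * Matrix.diagonal
            (fun i => ((hM.eigenvalues i * Real.logb 2 (hM.eigenvalues i) : ℝ) : ℂ)) * Uᴴ := by
          rw [hd]
  have htr : (M * matLog M).trace
      = ∑ i, ((hM.eigenvalues i * Real.logb 2 (hM.eigenvalues i) : ℝ) : ℂ) := by
    rw [hmul, Matrix.trace_mul_cycle, hU2, Matrix.one_mul, Matrix.trace_diagonal]
  rw [vnEnt, htr]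
  push_cast
  simp

private def Wmat {a : Type} [DecidableEq a] (U : Matrix a a ℂ) : Matrix (a × a) (a × a) ℂ :=
  fun p q => if q.1 = q.2 then (if p.1 = p.2 then U p.1 q.1 else 0) else (if p = q then 1 else 0)

open Matrix in
private lemma Wmat_unitary {a : Type} [Fintype a] [DecidableEq a] {U : Matrix a a ℂ}
    (hU : Uᴴ * U = 1) : (Wmat U)ᴴ * Wmat U = 1 := by
  have hUe : ∀ j l : a, (∑ k, (starRingEnd ℂ) (U k j) * U k l) = if j = l then 1 else 0 := by
    intro j l
    have h1 := congrFun (congrFun hU j) l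
    rw [Matrix.mul_apply] at h1
    simpa [Matrix.conjTranspose_apply, Matrix.one_apply, RCLike.star_def] using h1
  ext ⟨j, j'⟩ ⟨l, l'⟩
  rw [Matrix.mul_apply]
  simp only [Matrix.conjTranspose_apply, Wmat]
  rw [Fintype.sum_prod_type]
  by_cases hq : j = j' <;> by_cases hq' : l = l'
  · subst hq; subst hq'
    simp only [if_pos rfl]
    simp [apply_ite (starRingEnd ℂ), ite_mul, mul_ite, ite_and, Finset.sum_ite_eq,
      Finset.sum_ite_eq', Matrix.one_apply, Prod.ext_iff, hUe]
  · simp only [if_pos hq, if_neg hq']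
    subst hq
    simp only [apply_ite (starRingEnd ℂ), map_zero, mul_ite, mul_zero, mul_one, ite_and,
      Finset.sum_ite_eq, Finset.sum_ite_eq', Finset.mem_univ, if_true, Matrix.one_apply,
      Prod.ext_iff]
    split_ifs <;> simp_all <;> aesop
  · simp only [if_pos hq', if_neg hq]
    subst hq'
    simp only [apply_ite (starRingEnd ℂ), map_zero, _root_.map_one, ite_mul, zero_mul, one_mul,
      ite_and, Finset.sum_ite_eq, Finset.sum_ite_eq', Finset.mem_univ, if_true,
      Matrix.one_apply, Prod.ext_iff]
    split_ifs <;> simp_all <;> aesop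
  · simp only [if_neg hq, if_neg hq']
    simp only [apply_ite (starRingEnd ℂ), map_zero, _root_.map_one, ite_mul, zero_mul, one_mul,
      mul_ite, mul_zero, mul_one, ite_and, Finset.sum_ite_eq, Finset.sum_ite_eq',
      Finset.mem_univ, if_true, Matrix.one_apply, Prod.ext_iff]
    split_ifs <;> simp_all <;> aesop

open Matrix in
private lemma Wmat_decomp {a : Type} [Fintype a] [DecidableEq a] (U : Matrix a a ℂ)
    (lam : a → ℝ) :
    Wmat U * Matrix.diagonal (fun q : a × a => (((if q.1 = q.2 then lam q.1 else 0 : ℝ)) : ℂ))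
      * (Wmat U)ᴴ
    = maxCorr (U * Matrix.diagonal (fun i => (lam i : ℂ)) * Uᴴ) := by
  have hUd : ∀ i j : a, (U * Matrix.diagonal (fun i => (lam i : ℂ)) * Uᴴ) i j
      = ∑ k, U i k * (lam k : ℂ) * (starRingEnd ℂ) (U j k) := by
    intro i j
    rw [Matrix.mul_apply]
    simp [Matrix.mul_diagonal, Matrix.conjTranspose_apply, RCLike.star_def]
  ext ⟨i, i'⟩ ⟨j, j'⟩
  rw [Matrix.mul_apply, Fintype.sum_prod_type]
  simp only [Matrix.mul_diagonal, Matrix.conjTranspose_apply, Wmat, maxCorr, hUd]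
  simp only [apply_ite Complex.ofReal, Complex.ofReal_zero, apply_ite (starRingEnd ℂ),
    map_zero, _root_.map_one, ite_mul, zero_mul, one_mul, mul_ite, mul_zero, mul_one,
    ite_and, Finset.sum_ite_eq, Finset.sum_ite_eq', Finset.mem_univ, if_true, Prod.ext_iff]
  by_cases hi : i = i' <;> by_cases hj : j = j' <;>
    simp [hi, hj] <;> split_ifs <;> simp_all <;> aesop

open Matrix in
private lemma vnEnt_maxCorr {a : Type} [Fintype a] [DecidableEq a] (ρ : Matrix a a ℂ)
    (hρh : ρ.IsHermitian) : vnEnt (maxCorr ρ) = vnEnt ρ := by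
  set U : Matrix a a ℂ := (hρh.eigenvectorUnitary : Matrix a a ℂ) with hUdef
  have hU2 : Uᴴ * U = 1 := by
    have := Matrix.mem_unitaryGroup_iff'.mp hρh.eigenvectorUnitary.2
    simpa [Matrix.star_eq_conjTranspose] using this
  have hspec : ρ = U * Matrix.diagonal (fun i => (hρh.eigenvalues i : ℂ)) * Uᴴ := by
    have := hρh.spectral_theorem
    simpa [Matrix.star_eq_conjTranspose, Function.comp_def] using this
  have hdec : maxCorr ρ = Wmat U * Matrix.diagonal
      (fun q : a × a => (((if q.1 = q.2 then hρh.eigenvalues q.1 else 0 : ℝ)) : ℂ))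
      * (Wmat U)ᴴ := by
    rw [Wmat_decomp U hρh.eigenvalues, ← hspec]
  have hW1 : Wmat U * (Wmat U)ᴴ = 1 := mul_eq_one_comm.mp (Wmat_unitary hU2)
  have hherm : (maxCorr ρ).IsHermitian := by
    rw [Matrix.IsHermitian, hdec]
    rw [Matrix.conjTranspose_mul, Matrix.conjTranspose_mul, Matrix.conjTranspose_conjTranspose,
      Matrix.diagonal_conjTranspose]
    have hst : (star fun q : a × a =>
          ((if q.1 = q.2 then hρh.eigenvalues q.1 else 0 : ℝ) : ℂ))
        = fun q : a × a => ((if q.1 = q.2 then hρh.eigenvalues q.1 else 0 : ℝ) : ℂ) := by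
      funext q
      simp [Pi.star_apply, Complex.conj_ofReal]
    rw [hst, Matrix.mul_assoc]
  have hms := eigen_multiset' hherm (Wmat U)
    (fun q : a × a => (if q.1 = q.2 then hρh.eigenvalues q.1 else 0 : ℝ)) hW1 hdec
  have hsum := sum_comp_eq hms (fun x => x * Real.logb 2 x)
  rw [vnEnt_eq_sum' hherm, vnEnt_eq_sum' hρh]
  rw [hsum]
  congr 1
  rw [Fintype.sum_prod_type]
  have hterm : ∀ q : a × a, (if q.1 = q.2 then hρh.eigenvalues q.1 else 0 : ℝ)
      * Real.logb 2 (if q.1 = q.2 then hρh.eigenvalues q.1 else 0 : ℝ)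
      = if q.1 = q.2 then hρh.eigenvalues q.1 * Real.logb 2 (hρh.eigenvalues q.1) else 0 := by
    intro q; by_cases h : q.1 = q.2 <;> simp [h]
  simp only [hterm]
  simp [Finset.sum_ite_eq, Finset.sum_ite_eq']

private lemma ptraceLeft_maxCorr {a : Type} [Fintype a] [DecidableEq a] (ρ : Matrix a a ℂ) :
    ptraceLeft (maxCorr ρ) = dephase ρ := by
  ext i j
  simp only [ptraceLeft, maxCorr, dephase]
  by_cases h : i = j
  · subst h
    simp [Matrix.diagonal_apply_eq, Finset.sum_ite_eq, Finset.sum_ite_eq']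
  · rw [Matrix.diagonal_apply_ne _ h]
    apply Finset.sum_eq_zero
    intro k _
    rw [if_neg]
    rintro ⟨h1, h2⟩
    exact h (h1 ▸ h2)

/-- For every `d`-dimensional state `ρ_A`, the relative entropy of coherence
equals the coherent information of the associated maximally correlated state:
`C_r(ρ_A) = S(ρ̃_{A'}) − S(ρ̃_{AA'})`, with `ρ̃_{A'} = Tr_A ρ̃_{AA'}`. -/
theorem Cr_eq_coherentInfo_maxCorr
    {a : Type} [Fintype a] [DecidableEq a] (ρ : Matrix a a ℂ) (hρ : IsState ρ) :
    Cr ρ = vnEnt (ptraceLeft (maxCorr ρ)) - vnEnt (maxCorr ρ) := by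
  rw [Cr, ptraceLeft_maxCorr, vnEnt_maxCorr ρ hρ.1.1]

end QIT
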